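/- Let H = h + λ·1_Λ with h ∈ C²(𝕋^d), λ ∈ ℝ, and ∇h(u) = -λζ(u) on ∂Λ. Suppose x/N ∈ Λ, (x-e_j)/N ∈ Λ, (x+e_j)/N ∈ Λ^∁, and the boundary crossing rate is ξ^N_{x,x+e_j} = |ζ_{x,j}·e_j|/N while ξ^N_{x,x-e_j} = 1. Then N ξ^N_{x,x+e_j}(H((x+e_j)/N) - H(x/N)) + N ξ^N_{x,x-e_j}(H((x-e_j)/N) - H(x/N)) converges to -λ ζ(u)·e_j - ∂h/∂u_j(u) = 0 as N → ∞, where u ∈ ∂Λ ∩ [x/N, (x+e_j)/N] and x/N → u. -/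

import Mathlib

open Filter
open scoped RealInnerProductSpace

lemma key13 {E : Type*} [NormedAddCommGroup E] [NormedSpace ℝ E]
    {f : E → ℝ} {f' : E →L[ℝ] ℝ} {u : E} (hf : HasStrictFDerivAt f f' u)
    {x : ℕ → E} (v : E) (hx : Tendsto x atTop (nhds u)) :
    Tendsto (fun N : ℕ => (N : ℝ) * (f (x N + ((N : ℝ))⁻¹ • v) - f (x N))) atTop
      (nhds (f' v)) := by
  have hsm : Tendsto (fun N : ℕ => ((N : ℝ))⁻¹ • v) atTop (nhds 0) := by
    simpa using (tendsto_inv_atTop_nhds_zero_nat (𝕜 := ℝ)).smul_const v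
  have hy : Tendsto (fun N : ℕ => x N + ((N : ℝ))⁻¹ • v) atTop (nhds u) := by
    simpa using hx.add hsm
  have hq : Tendsto (fun N : ℕ => (x N + ((N : ℝ))⁻¹ • v, x N)) atTop (nhds (u, u)) :=
    hy.prodMk_nhds hx
  have h1 := hf.isLittleO.comp_tendsto hq
  simp only [Function.comp_def, add_sub_cancel_left] at h1
  -- h1 : (fun N => f (x N + N⁻¹•v) - f (x N) - f' (N⁻¹ • v)) =o[atTop] fun N => N⁻¹ • v
  have h2 : (fun N : ℕ => ((N : ℝ))⁻¹ • v) =O[atTop] (fun N : ℕ => ((N : ℝ))⁻¹) := by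
    apply Asymptotics.IsBigO.of_bound ‖v‖
    filter_upwards with N
    rw [norm_smul]
    simp [mul_comm]
  have h3 := (h1.trans_isBigO h2).tendsto_div_nhds_zero
  have h4 : Tendsto (fun N : ℕ =>
      (N : ℝ) * (f (x N + ((N : ℝ))⁻¹ • v) - f (x N) - f' (((N : ℝ))⁻¹ • v)))
      atTop (nhds 0) := by
    refine h3.congr fun N => ?_
    rw [div_eq_mul_inv, inv_inv, mul_comm]
  have h5 : Tendsto (fun N : ℕ =>
      (N : ℝ) * (f (x N + ((N : ℝ))⁻¹ • v) - f (x N) - f' (((N : ℝ))⁻¹ • v)) + f' v)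
      atTop (nhds (f' v)) := by
    simpa using h4.add tendsto_const_nhds
  refine h5.congr' ?_
  filter_upwards [eventually_ge_atTop 1] with N hN
  have hN0 : (N : ℝ) ≠ 0 := by positivity
  rw [map_smul]
  field_simp
  simp only [smul_eq_mul]
  field_simp
  ring

/-- let `H = h + λ·1_Λ` with `h ∈ C²`, `∇h(u) = -λζ(u)` on `∂Λ`.
For lattice points `p N ∈ Λ` with `p N - e_j/N ∈ Λ`, `p N + e_j/N ∉ Λ`
(`p N → u ∈ ∂Λ`), boundary crossing rate `ξ^N_{x,x+e_j} = |ζ_{x,j}·e_j|/N`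
(with `ζ_{x,j} = ζN N → ζ(u)`) and interior rate `ξ^N_{x,x-e_j} = 1`, the
combination
`N ξ^N_{x,x+e_j}(H(p+e_j/N) - H(p)) + N ξ^N_{x,x-e_j}(H(p-e_j/N) - H(p))`
converges to `-λ ζ(u)·e_j - ∂h/∂u_j(u)`, which is `0` by the boundary
condition. -/
theorem stmt13 (d : ℕ) (j : Fin d)
    (Λ : Set (EuclideanSpace ℝ (Fin d)))
    (ζ : EuclideanSpace ℝ (Fin d) → EuclideanSpace ℝ (Fin d))
    (h : EuclideanSpace ℝ (Fin d) → ℝ) (lam : ℝ)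
    (hh : ContDiff ℝ 2 h)
    (u : EuclideanSpace ℝ (Fin d)) (hu : u ∈ frontier Λ)
    (hbc : ∀ v, fderiv ℝ h u v = -lam * ⟪ζ u, v⟫)
    (hsgn : 0 ≤ ⟪ζ u, EuclideanSpace.single j (1 : ℝ)⟫)
    (p ζN : ℕ → EuclideanSpace ℝ (Fin d))
    (hp : Tendsto p atTop (nhds u))
    (hζN : Tendsto ζN atTop (nhds (ζ u)))
    (hin : ∀ N : ℕ, 1 ≤ N →
      p N ∈ Λ ∧
      p N - ((N : ℝ))⁻¹ • EuclideanSpace.single j (1 : ℝ) ∈ Λ ∧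
      p N + ((N : ℝ))⁻¹ • EuclideanSpace.single j (1 : ℝ) ∉ Λ) :
    let H : EuclideanSpace ℝ (Fin d) → ℝ :=
      fun v => h v + lam * Set.indicator Λ (fun _ => (1 : ℝ)) v
    let ej : EuclideanSpace ℝ (Fin d) := EuclideanSpace.single j (1 : ℝ)
    Tendsto (fun N : ℕ =>
        (N : ℝ) * (|⟪ζN N, ej⟫| / N) * (H (p N + ((N : ℝ))⁻¹ • ej) - H (p N)) +
        (N : ℝ) * 1 * (H (p N - ((N : ℝ))⁻¹ • ej) - H (p N)))
      atTop (nhds (-lam * ⟪ζ u, ej⟫ - fderiv ℝ h u ej)) ∧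
    -lam * ⟪ζ u, ej⟫ - fderiv ℝ h u ej = 0 := by
  intro H ej
  have hzero : -lam * ⟪ζ u, ej⟫ - fderiv ℝ h u ej = 0 := by
    rw [hbc ej]; ring
  refine ⟨?_, hzero⟩
  have hstrict : HasStrictFDerivAt h (fderiv ℝ h u) u :=
    (hh.contDiffAt).hasStrictFDerivAt (by norm_num)
  -- interior term
  have hsm : Tendsto (fun N : ℕ => ((N : ℝ))⁻¹ • ej) atTop (nhds 0) := by
    simpa using (tendsto_inv_atTop_nhds_zero_nat (𝕜 := ℝ)).smul_const ej
  have hy : Tendsto (fun N : ℕ => p N + ((N : ℝ))⁻¹ • ej) atTop (nhds u) := by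
    simpa using hp.add hsm
  have hcont : Continuous h := hh.continuous
  -- first term limit
  have hT1 : Tendsto (fun N : ℕ =>
      |⟪ζN N, ej⟫| * (h (p N + ((N : ℝ))⁻¹ • ej) - h (p N) - lam)) atTop
      (nhds (-lam * ⟪ζ u, ej⟫)) := by
    have habs : Tendsto (fun N : ℕ => |⟪ζN N, ej⟫|) atTop (nhds |⟪ζ u, ej⟫|) := by
      exact (continuous_abs.tendsto _).comp
        ((Continuous.inner continuous_id continuous_const).tendsto _ |>.comp hζN)
    have hdiff : Tendsto (fun N : ℕ =>
        h (p N + ((N : ℝ))⁻¹ • ej) - h (p N) - lam) atTop (nhds (-lam)) := by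
      have := ((hcont.tendsto u).comp hy).sub ((hcont.tendsto u).comp hp)
      simpa using this.sub (tendsto_const_nhds (x := lam))
    have key : (-lam * ⟪ζ u, ej⟫) = |⟪ζ u, ej⟫| * (-lam) := by
      rw [abs_of_nonneg hsgn]; ring
    rw [key]
    exact habs.mul hdiff
  -- second term limit
  have hT2 : Tendsto (fun N : ℕ =>
      (N : ℝ) * (h (p N + ((N : ℝ))⁻¹ • (-ej)) - h (p N))) atTop
      (nhds (-(fderiv ℝ h u ej))) := by
    have := key13 hstrict (-ej) hp
    simpa using this
  have hsum := hT1.add hT2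
  rw [show -lam * ⟪ζ u, ej⟫ - fderiv ℝ h u ej
      = -lam * ⟪ζ u, ej⟫ + -(fderiv ℝ h u ej) from sub_eq_add_neg _ _]
  refine hsum.congr' ?_
  · filter_upwards [eventually_ge_atTop 1] with N hN
    obtain ⟨h1, h2, h3⟩ := hin N hN
    have hN0 : (N : ℝ) ≠ 0 := by positivity
    have e1 : H (p N + ((N : ℝ))⁻¹ • ej) = h (p N + ((N : ℝ))⁻¹ • ej) := by
      simp [H, ej, Set.indicator_of_notMem h3]
    have e2 : H (p N) = h (p N) + lam := by
      simp [H, Set.indicator_of_mem h1]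
    have e3 : H (p N - ((N : ℝ))⁻¹ • ej) = h (p N - ((N : ℝ))⁻¹ • ej) + lam := by
      simp [H, ej, Set.indicator_of_mem h2]
    have e4 : p N + ((N : ℝ))⁻¹ • (-ej) = p N - ((N : ℝ))⁻¹ • ej := by
      rw [smul_neg, ← sub_eq_add_neg]
    rw [e1, e2, e3, e4, mul_comm ((N:ℝ)) (|⟪ζN N, ej⟫| / (N:ℝ)),
      div_mul_cancel₀ _ hN0, mul_one]
    ring
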